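/- Let S = {x ∈ NICF_4 : −1/2 ≤ x < 1/2 and x is irrational}. Every positive element x of S satisfies (√6 − 2)/2 ≤ x ≤ √6 − 2; moreover (√6 − 2)/2 and √6 − 2 both belong to S, so (√6 − 2)/2 is the smallest positive element of S and √6 − 2 is the largest element of S. -/

import Mathlib

open Filter Pointwise

/-- NICF iterates: `x₀ = x`, `x_{i+1} = 1/(x_i - ⌊x_i⌉)`, with `⌊t⌉ = round t = ⌊t + 1/2⌋`. -/
noncomputable def nicfX (x : ℝ) : ℕ → ℝ
  | 0 => x
  | n + 1 => 1 / (nicfX x n - round (nicfX x n))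

/-- The `i`-th NICF digit of `x`. -/
noncomputable def nicfDigit (x : ℝ) (i : ℕ) : ℤ := round (nicfX x i)

/-- The `i`-th NICF digit is genuinely defined: the algorithm has not terminated before
step `i` (i.e. `x_m ≠ a_m` for all `m < i`). -/
def nicfDefined (x : ℝ) (i : ℕ) : Prop :=
  ∀ m, m < i → nicfX x m ≠ (nicfDigit x m : ℝ)

/-- `NICFset r`: the reals all of whose NICF digits `a_i` with `i ≥ 1` satisfy `|a_i| ≤ r`. -/
def NICFset (r : ℤ) : Set ℝ :=
  {x | ∀ i : ℕ, 1 ≤ i → nicfDefined x i → |nicfDigit x i| ≤ r}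

/-- The irrational elements of `NICF₄` lying in `[-1/2, 1/2)`. -/
noncomputable def NICF4irr : Set ℝ :=
  {x | x ∈ NICFset 4 ∧ -(1 / 2) ≤ x ∧ x < 1 / 2 ∧ Irrational x}

lemma s6_sq : Real.sqrt 6 ^ 2 = 6 := Real.sq_sqrt (by norm_num)
lemma s6_lb : (2.449 : ℝ) < Real.sqrt 6 := by nlinarith [s6_sq, Real.sqrt_nonneg 6]
lemma s6_ub : Real.sqrt 6 < 2.45 := by nlinarith [s6_sq, Real.sqrt_nonneg 6]

lemma s6_irr : Irrational (Real.sqrt 6) := by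
  refine irrational_nrt_of_notint_nrt 2 6 (by rw [s6_sq]; norm_num) ?_ (by norm_num)
  rintro ⟨y, hy⟩
  have h1 := s6_lb; have h2 := s6_ub
  rw [hy] at h1 h2
  have h3 : (2:ℤ) < y := by exact_mod_cast show (2:ℝ) < y by linarith
  have h4 : y < 3 := by exact_mod_cast show (y:ℝ) < 3 by linarith
  omega

lemma round_eq_of {t : ℝ} {k : ℤ} (h1 : (k:ℝ) - 1/2 < t) (h2 : t < k + 1/2) : round t = k := by
  rw [round_eq]
  apply Int.floor_eq_iff.mpr
  constructor <;> push_cast <;> linarith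

lemma round_gt (t : ℝ) : t - 1/2 < (round t : ℝ) := by
  rw [round_eq]
  have := Int.sub_one_lt_floor (t + 1/2)
  push_cast at this ⊢
  linarith

lemma nicfX_irrational {x : ℝ} (hx : Irrational x) : ∀ n, Irrational (nicfX x n)
  | 0 => hx
  | n + 1 => by
    have h2 : Irrational (nicfX x n - round (nicfX x n)) :=
      (nicfX_irrational hx n).sub_intCast _
    simpa [nicfX, one_div] using h2.inv

lemma nicfDefined_of_irrational {x : ℝ} (hx : Irrational x) (i : ℕ) : nicfDefined x i :=
  fun m _ => (nicfX_irrational hx m).ne_int _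

lemma frac_lt {t : ℝ} (ht : Irrational t) : |t - round t| < 1/2 := by
  rcases lt_or_eq_of_le (abs_sub_round t) with h | h
  · exact h
  · exfalso
    have hirr : Irrational (t - round t) := ht.sub_intCast _
    rcases abs_eq (by norm_num : (0:ℝ) ≤ 1/2) |>.mp h with h' | h'
    · exact hirr ⟨1/2, by push_cast; linarith⟩
    · exact hirr ⟨-(1/2), by push_cast; linarith⟩

/-- the fractional remainders -/
noncomputable def gg (x : ℝ) (i : ℕ) : ℝ := nicfX x i - (nicfDigit x i : ℝ)

lemma gg_lt {x : ℝ} (hx : Irrational x) (i : ℕ) : |gg x i| < 1/2 := frac_lt (nicfX_irrational hx i)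

lemma nicfX_succ (x : ℝ) (i : ℕ) : nicfX x (i+1) = 1 / gg x i := rfl

/-- Key expansion step: if the remainder exceeds √6 - 2, two steps later it still does,
and the excess at least doubles. -/
lemma key_step {x : ℝ} (hx : Irrational x) (hb : ∀ i : ℕ, 1 ≤ i → |nicfDigit x i| ≤ 4)
    (i : ℕ) (h : Real.sqrt 6 - 2 < gg x i) :
    Real.sqrt 6 - 2 < gg x (i+2) ∧
      2 * (gg x i - (Real.sqrt 6 - 2)) ≤ gg x (i+2) - (Real.sqrt 6 - 2) := by
  set s := Real.sqrt 6 with hs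
  have hs2 := s6_sq
  have hsl := s6_lb
  have hsu := s6_ub
  set u := gg x i with hu
  have hu2 : u < 1/2 := (abs_lt.mp (gg_lt hx i)).2
  have hu0 : 0 < u := by linarith
  have hy1 : nicfX x (i+1) = 1 / u := nicfX_succ x i
  set y1 := nicfX x (i+1) with hy1d
  have hy1u : y1 * u = 1 := by rw [hy1]; field_simp
  have hy1l : 2 < y1 := by nlinarith
  have hy1h : y1 < (s + 2) / 2 := by nlinarith
  have hd1 : nicfDigit x (i+1) = 2 := round_eq_of (by push_cast; nlinarith) (by push_cast; nlinarith)
  set v := gg x (i+1) with hv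
  have hvdef : v = y1 - 2 := by rw [hv, gg, hd1]; push_cast; ring
  have hv0 : 0 < v := by rw [hvdef]; linarith
  have hvb : v < (s - 2) / 2 := by rw [hvdef]; linarith
  have hy2 : nicfX x (i+2) = 1 / v := nicfX_succ x (i+1)
  set y2 := nicfX x (i+2) with hy2d
  have hy2v : y2 * v = 1 := by rw [hy2]; field_simp
  have hy2l : s + 2 < y2 := by nlinarith
  -- digit at i+2 is forced to be 4
  have hb2 := hb (i+2) (by omega)
  have hd2l : 4 ≤ nicfDigit x (i+2) := by
    have h1 : y2 - 1/2 < ((nicfDigit x (i+2) : ℤ) : ℝ) := round_gt y2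
    have h2 : (3:ℝ) < ((nicfDigit x (i+2) : ℤ) : ℝ) := by linarith
    exact_mod_cast show (3:ℤ) < nicfDigit x (i+2) from by exact_mod_cast h2
  have hd2 : nicfDigit x (i+2) = 4 := le_antisymm (abs_le.mp hb2).2 hd2l
  set w := gg x (i+2) with hw
  have hwdef : w = y2 - 4 := by rw [hw, gg, hd2]; push_cast; ring
  have hw1 : s - 2 < w := by rw [hwdef]; linarith
  refine ⟨hw1, ?_⟩
  -- product identities
  have huv : u * v = 1 - 2 * u := by
    have : u * v = u * y1 - 2 * u := by rw [hvdef]; ring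
    rw [this, mul_comm u y1, hy1u]
  have hvw : v * w = 1 - 4 * v := by
    have : v * w = v * y2 - 4 * v := by rw [hwdef]; ring
    rw [this, mul_comm v y2, hy2v]
  have h12 : (0:ℝ) < 1 - 2*u := by linarith
  have hwkey : (1 - 2*u) * w = 9*u - 4 := by
    linear_combination (-w - 4) * huv + u * hvw
  have hfact : (1 - 2*u) * (w - (s-2) - 2*(u - (s-2))) = (u - (s-2)) * (4*u + 2*s + 3) := by
    linear_combination hwkey + 2 * hs2
  nlinarith [hfact, h12, mul_pos (sub_pos.2 h) (show (0:ℝ) < 4*u + 2*s + 3 by nlinarith)]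

lemma key_iter {x : ℝ} (hx : Irrational x) (hb : ∀ i : ℕ, 1 ≤ i → |nicfDigit x i| ≤ 4)
    (i : ℕ) (h : Real.sqrt 6 - 2 < gg x i) (k : ℕ) :
    Real.sqrt 6 - 2 < gg x (i+2*k) ∧
      2^k * (gg x i - (Real.sqrt 6 - 2)) ≤ gg x (i+2*k) - (Real.sqrt 6 - 2) := by
  induction k with
  | zero => simpa using h
  | succ k ih =>
    have hstep := key_step hx hb (i+2*k) ih.1
    have h2 : i + 2*(k+1) = i + 2*k + 2 := by omega
    rw [h2]
    refine ⟨hstep.1, ?_⟩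
    have := ih.2
    have h0 : 0 < gg x i - (Real.sqrt 6 - 2) := by linarith
    calc 2^(k+1) * (gg x i - (Real.sqrt 6 - 2))
        = 2 * (2^k * (gg x i - (Real.sqrt 6 - 2))) := by ring
      _ ≤ 2 * (gg x (i+2*k) - (Real.sqrt 6 - 2)) := by linarith
      _ ≤ gg x (i+2*k+2) - (Real.sqrt 6 - 2) := hstep.2

lemma gg_le {x : ℝ} (hx : Irrational x) (hb : ∀ i : ℕ, 1 ≤ i → |nicfDigit x i| ≤ 4)
    (i : ℕ) : gg x i ≤ Real.sqrt 6 - 2 := by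
  by_contra hc
  push_neg at hc
  have h0 : 0 < gg x i - (Real.sqrt 6 - 2) := by linarith
  obtain ⟨k, hk⟩ := pow_unbounded_of_one_lt
    ((1/2 - (Real.sqrt 6 - 2)) / (gg x i - (Real.sqrt 6 - 2))) (one_lt_two (α := ℝ))
  have h1 : 1/2 - (Real.sqrt 6 - 2) < 2^k * (gg x i - (Real.sqrt 6 - 2)) := by
    rw [div_lt_iff₀ h0] at hk
    linarith
  have h2 := (key_iter hx hb i hc k).2
  have h3 : |gg x (i+2*k)| < 1/2 := gg_lt hx _
  have h4 := (abs_lt.mp h3).2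
  linarith

lemma roundA : round (Real.sqrt 6 + 2) = 4 :=
  round_eq_of (by push_cast; nlinarith [s6_lb]) (by push_cast; nlinarith [s6_ub])

lemma roundB : round ((Real.sqrt 6 + 2)/2) = 2 :=
  round_eq_of (by push_cast; nlinarith [s6_lb]) (by push_cast; nlinarith [s6_ub])

lemma s6_ne2 : Real.sqrt 6 - 2 ≠ 0 := by nlinarith [s6_lb]

lemma stepAB : 1/((Real.sqrt 6 + 2) - ((4:ℤ):ℝ)) = (Real.sqrt 6 + 2)/2 := by
  have h := s6_ne2
  push_cast
  rw [show Real.sqrt 6 + 2 - 4 = Real.sqrt 6 - 2 by ring]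
  rw [div_eq_div_iff h (by norm_num)]
  nlinarith [s6_sq]

lemma stepBA : 1/((Real.sqrt 6 + 2)/2 - ((2:ℤ):ℝ)) = Real.sqrt 6 + 2 := by
  have h := s6_ne2
  push_cast
  rw [show (Real.sqrt 6 + 2)/2 - 2 = (Real.sqrt 6 - 2)/2 by ring]
  rw [eq_comm, eq_div_iff (by positivity : ((Real.sqrt 6 - 2)/2) ≠ 0)]
  nlinarith [s6_sq]

lemma cycA {x : ℝ} (h1 : nicfX x 1 = Real.sqrt 6 + 2) :
    ∀ n, nicfX x (2*n+1) = Real.sqrt 6 + 2 ∧ nicfX x (2*n+2) = (Real.sqrt 6 + 2)/2 := by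
  intro n
  induction n with
  | zero =>
    refine ⟨h1, ?_⟩
    show 1 / (nicfX x 1 - round (nicfX x 1)) = _
    rw [h1, roundA]; exact stepAB
  | succ n ih =>
    have h3 : nicfX x (2*(n+1)+1) = Real.sqrt 6 + 2 := by
      show 1 / (nicfX x (2*n+2) - round (nicfX x (2*n+2))) = _
      rw [ih.2, roundB]; exact stepBA
    refine ⟨h3, ?_⟩
    show 1 / (nicfX x (2*(n+1)+1) - round (nicfX x (2*(n+1)+1))) = _
    rw [h3, roundA]; exact stepAB

lemma cycB {x : ℝ} (h1 : nicfX x 1 = (Real.sqrt 6 + 2)/2) :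
    ∀ n, nicfX x (2*n+1) = (Real.sqrt 6 + 2)/2 ∧ nicfX x (2*n+2) = Real.sqrt 6 + 2 := by
  intro n
  induction n with
  | zero =>
    refine ⟨h1, ?_⟩
    show 1 / (nicfX x 1 - round (nicfX x 1)) = _
    rw [h1, roundB]; exact stepBA
  | succ n ih =>
    have h3 : nicfX x (2*(n+1)+1) = (Real.sqrt 6 + 2)/2 := by
      show 1 / (nicfX x (2*n+2) - round (nicfX x (2*n+2))) = _
      rw [ih.2, roundA]; exact stepAB
    refine ⟨h3, ?_⟩
    show 1 / (nicfX x (2*(n+1)+1) - round (nicfX x (2*(n+1)+1))) = _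
    rw [h3, roundB]; exact stepBA

lemma digit_bound_of_cycA {x : ℝ} (h1 : nicfX x 1 = Real.sqrt 6 + 2) :
    ∀ i : ℕ, 1 ≤ i → |nicfDigit x i| ≤ 4 := by
  intro i hi
  obtain ⟨j, rfl⟩ : ∃ j, i = j + 1 := ⟨i - 1, by omega⟩
  rcases Nat.even_or_odd j with ⟨m, hm⟩ | ⟨m, hm⟩
  · have : nicfX x (2*m+1) = Real.sqrt 6 + 2 := (cycA h1 m).1
    rw [show j + 1 = 2*m+1 by omega, nicfDigit, this, roundA]; norm_num
  · have : nicfX x (2*m+2) = (Real.sqrt 6 + 2)/2 := (cycA h1 m).2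
    rw [show j + 1 = 2*m+2 by omega, nicfDigit, this, roundB]; norm_num

lemma digit_bound_of_cycB {x : ℝ} (h1 : nicfX x 1 = (Real.sqrt 6 + 2)/2) :
    ∀ i : ℕ, 1 ≤ i → |nicfDigit x i| ≤ 4 := by
  intro i hi
  obtain ⟨j, rfl⟩ : ∃ j, i = j + 1 := ⟨i - 1, by omega⟩
  rcases Nat.even_or_odd j with ⟨m, hm⟩ | ⟨m, hm⟩
  · have : nicfX x (2*m+1) = (Real.sqrt 6 + 2)/2 := (cycB h1 m).1
    rw [show j + 1 = 2*m+1 by omega, nicfDigit, this, roundB]; norm_num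
  · have : nicfX x (2*m+2) = Real.sqrt 6 + 2 := (cycB h1 m).2
    rw [show j + 1 = 2*m+2 by omega, nicfDigit, this, roundA]; norm_num

lemma mem_beta : (Real.sqrt 6 - 2) / 2 ∈ NICF4irr := by
  have hsl := s6_lb; have hsu := s6_ub; have hs2 := s6_sq
  have hround : round ((Real.sqrt 6 - 2)/2) = 0 :=
    round_eq_of (by push_cast; nlinarith) (by push_cast; nlinarith)
  have h1 : nicfX ((Real.sqrt 6 - 2)/2) 1 = Real.sqrt 6 + 2 := by
    show 1 / ((Real.sqrt 6 - 2)/2 - round ((Real.sqrt 6 - 2)/2)) = _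
    rw [hround]
    push_cast
    rw [sub_zero, eq_comm, eq_div_iff (ne_of_gt (by nlinarith : (0:ℝ) < (Real.sqrt 6 - 2)/2))]
    nlinarith
  refine ⟨fun i hi _ => digit_bound_of_cycA h1 i hi, by nlinarith, by nlinarith, ?_⟩
  have := (s6_irr.sub_intCast 2).div_intCast (show (2:ℤ) ≠ 0 by norm_num)
  simpa using this

lemma mem_alpha : Real.sqrt 6 - 2 ∈ NICF4irr := by
  have hsl := s6_lb; have hsu := s6_ub; have hs2 := s6_sq
  have hround : round (Real.sqrt 6 - 2) = 0 :=
    round_eq_of (by push_cast; nlinarith) (by push_cast; nlinarith)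
  have h1 : nicfX (Real.sqrt 6 - 2) 1 = (Real.sqrt 6 + 2)/2 := by
    show 1 / ((Real.sqrt 6 - 2) - round (Real.sqrt 6 - 2)) = _
    rw [hround]
    push_cast
    rw [sub_zero, div_eq_div_iff s6_ne2 (by norm_num)]
    nlinarith
  refine ⟨fun i hi _ => digit_bound_of_cycB h1 i hi, by nlinarith, by nlinarith, ?_⟩
  simpa using s6_irr.sub_intCast 2

theorem nicf4irr_smallest_positive_and_largest :
    (∀ x ∈ NICF4irr, 0 < x → (Real.sqrt 6 - 2) / 2 ≤ x ∧ x ≤ Real.sqrt 6 - 2) ∧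
    0 < (Real.sqrt 6 - 2) / 2 ∧
    (Real.sqrt 6 - 2) / 2 ∈ NICF4irr ∧
    Real.sqrt 6 - 2 ∈ NICF4irr := by
  have hsl := s6_lb; have hsu := s6_ub; have hs2 := s6_sq
  refine ⟨?_, by nlinarith, mem_beta, mem_alpha⟩
  rintro x ⟨hset, hlo, hhi, hirr⟩ hpos
  have hb : ∀ i : ℕ, 1 ≤ i → |nicfDigit x i| ≤ 4 :=
    fun i hi => hset i hi (nicfDefined_of_irrational hirr i)
  have hround : round x = 0 := round_eq_of (by push_cast; linarith) (by push_cast; linarith)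
  have hg0 : gg x 0 = x := by
    rw [gg]
    show x - ((round x : ℤ) : ℝ) = x
    rw [hround]; push_cast; ring
  have hupper : x ≤ Real.sqrt 6 - 2 := by
    have := gg_le hirr hb 0
    rwa [hg0] at this
  refine ⟨?_, hupper⟩
  by_contra hc
  push_neg at hc
  -- x < (√6-2)/2, show digit 1 forces remainder > √6 - 2, contradiction
  have hy1 : nicfX x 1 = 1 / x := by
    show 1 / (x - ((round x : ℤ) : ℝ)) = _
    rw [hround]; push_cast; rw [sub_zero]
  have hy1x : nicfX x 1 * x = 1 := by rw [hy1]; field_simp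
  have hy1l : Real.sqrt 6 + 2 < nicfX x 1 := by nlinarith
  have hb1 := (abs_le.mp (hb 1 (by omega))).2
  have hb1' : ((nicfDigit x 1 : ℤ) : ℝ) ≤ 4 := by exact_mod_cast hb1
  have hgg1 : Real.sqrt 6 - 2 < gg x 1 := by
    rw [gg]; linarith
  have := gg_le hirr hb 1
  linarith
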